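/- There is no finite parametric Markov chain equivalent to the 2-state interval Markov chain I under the at-every-step semantics, where I has states s1 (labeled α, initial) and s0 (labeled β), transitions P(s1,s1) = [0,1], P(s1,s0) = [0,1], P(s0,s0) = [1,1]. Specifically, for every n, the pMC with states s1,...,sn (labeled α) and s0 (labeled β) and parametric transitions p_i on the self-loop of s_i, q_i from s_i to s0 and 1−p_i−q_i from s_i to s_{i+1} (with 1−p_n from s_n to s0), is entailed by I but not equivalent to I: there exists a Markov chain satisfying I (at-every-step) that is not bisimilar to any instance of the pMC. -/

import Mathlib

open Classical

structure MC (S : Type) (A : Type) where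
  s0 : S
  p : S → S → ℝ
  nonneg : ∀ s s', 0 ≤ p s s'
  sum_one : ∀ s, ∑ᶠ s', p s s' = 1
  V : S → Set A

namespace MC

variable {S A : Type}

/-- Probability of a finite path (product of transition probabilities). -/
def pathProb (p : S → S → ℝ) : S → List S → ℝ
  | _, [] => 1
  | s, s' :: l => p s s' * pathProb p s' l

/-- `UntilPath φ ψ s l` : starting from `s`, the (nonempty) suffix `l` first reaches a
`ψ`-state at its last position, with `φ` holding at all strictly earlier positions after
the start. -/
inductive UntilPath (φ ψ : S → Prop) : S → List S → Prop
  | single {s s' : S} (h : ψ s') : UntilPath φ ψ s [s']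
  | cons {s s' : S} {l : List S} (hψ : ¬ ψ s') (hφ : φ s') (h : UntilPath φ ψ s' l) :
      UntilPath φ ψ s (s' :: l)

/-- `P_s(φ U ψ)` : first-passage sum over until-paths. -/
noncomputable def untilProb (p : S → S → ℝ) (φ ψ : S → Prop) (s : S) : ℝ :=
  ∑' l : {l : List S // UntilPath φ ψ s l}, pathProb p s l.1

/-- `P_s(◊ψ)` : probability of eventually reaching a `ψ`-state from `s`. -/
noncomputable def reachProb (p : S → S → ℝ) (ψ : S → Prop) (s : S) : ℝ :=
  if ψ s then 1 else untilProb p (fun _ => True) ψ s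

/-- `P^M(◊α)` : probability of eventually reaching a state labeled `α` from the initial
state of `M`. -/
noncomputable def Preach (M : MC S A) (α : Set A) : ℝ :=
  reachProb M.p (fun s => M.V s = α) M.s0

/-- Reachability via positive-probability transitions. -/
def Reaches (p : S → S → ℝ) : S → S → Prop :=
  Relation.ReflTransGen fun a b => 0 < p a b

end MC

/-- Interval Markov chain: each transition carries an interval `[Plo, Phi] ⊆ [0,1]`. -/
structure IMC (S : Type) (A : Type) where
  s0 : S
  Plo : S → S → ℝ
  Phi : S → S → ℝ
  V : S → Set A

/-- Once-and-for-all satisfaction `M ⊨ᵒ I`. -/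
def SatO {S A : Type} (M : MC S A) (I : IMC S A) : Prop :=
  M.s0 = I.s0 ∧ M.V = I.V ∧
    ∀ s, MC.Reaches M.p M.s0 s → ∀ s', M.p s s' ∈ Set.Icc (I.Plo s s') (I.Phi s s')

/-- `R` is an at-every-step satisfaction relation between `M` and `I`. -/
def IsSatRel {T S A : Type} (M : MC T A) (I : IMC S A) (R : T → S → Prop) : Prop :=
  R M.s0 I.s0 ∧
    ∀ t s, R t s → M.V t = I.V s ∧
      ∃ δ : T → S → ℝ,
        (∀ t' s', 0 ≤ δ t' s') ∧
        (∀ t', 0 < M.p t t' → ∑ᶠ s', δ t' s' = 1) ∧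
        (∀ s', (∑ᶠ t', M.p t t' * δ t' s') ∈ Set.Icc (I.Plo s s') (I.Phi s s')) ∧
        (∀ t' s', 0 < δ t' s' → R t' s')

/-- At-every-step satisfaction `M ⊨ᵃ I`. -/
def SatA {T S A : Type} (M : MC T A) (I : IMC S A) : Prop :=
  ∃ R, IsSatRel M I R

/-- `M` satisfies `I` with degree `n`. -/
def SatADeg {T S A : Type} (n : ℕ) (M : MC T A) (I : IMC S A) : Prop :=
  ∃ R, IsSatRel M I R ∧ ∀ t, {s | R t s}.ncard ≤ n

/-- Combined transition function on the disjoint union of two Markov chains. -/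
def sumP {S T A : Type} (M : MC S A) (N : MC T A) : S ⊕ T → S ⊕ T → ℝ
  | .inl a, .inl b => M.p a b
  | .inr a, .inr b => N.p a b
  | _, _ => 0

/-- Combined labelling on the disjoint union. -/
def sumV {S T A : Type} (M : MC S A) (N : MC T A) : S ⊕ T → Set A :=
  Sum.elim M.V N.V

/-- Probabilistic bisimilarity of two Markov chains. -/
def Bisimilar {S T A : Type} (M : MC S A) (N : MC T A) : Prop :=
  ∃ B : (S ⊕ T) → (S ⊕ T) → Prop,
    Equivalence B ∧ B (Sum.inl M.s0) (Sum.inr N.s0) ∧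
    ∀ a b, B a b → sumV M N a = sumV M N b ∧
      ∀ C : Set (S ⊕ T), (∀ x y, B x y → (x ∈ C ↔ y ∈ C)) →
        (∑ᶠ c ∈ C, sumP M N a c) = ∑ᶠ c ∈ C, sumP M N b c

/-- The 2-state IMC `I`: state `1` (labeled `α`, initial), state `0` (labeled `β`);
`P(1,1) = [0,1]`, `P(1,0) = [0,1]`, `P(0,0) = [1,1]`, `P(0,1) = [0,0]`. -/
def I9 : IMC (Fin 2) Unit where
  s0 := 1
  Plo := fun i j => if i = 0 ∧ j = 0 then 1 else 0
  Phi := fun i j => if i = 0 then (if j = 0 then 1 else 0) else 1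
  V := fun i => if i = 0 then ∅ else Set.univ

/-- Transition function of the pMC `P_n` under a valuation of the parameters
`p_i` (self-loops) and `q_i` (jumps to the absorbing `β`-state `0`). -/
def pmcP (n : ℕ) (pv qv : ℕ → ℝ) : Fin (n + 1) → Fin (n + 1) → ℝ := fun i j =>
  if i.val = 0 then (if j.val = 0 then 1 else 0)
  else if i.val < n then
    (if j = i then pv i.val
     else if j.val = 0 then qv i.val
     else if j.val = i.val + 1 then 1 - pv i.val - qv i.val
     else 0)
  else (if j = i then pv i.val else if j.val = 0 then 1 - pv i.val else 0)

/-- Labels of the pMC `P_n`: state `0` is labeled `β = ∅`, states `1,…,n` are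
labeled `α = univ`. -/
def pmcV (n : ℕ) : Fin (n + 1) → Set Unit := fun i => if i.val = 0 then ∅ else Set.univ

/-- `N` is an instance (implementation) of the pMC `P_n`: its transition function comes
from some parameter valuation. -/
def IsInst9 (n : ℕ) (N : MC (Fin (n + 1)) Unit) : Prop :=
  N.s0.val = 1 ∧ N.V = pmcV n ∧ ∃ pv qv : ℕ → ℝ, N.p = pmcP n pv qv


lemma finsum_fin {k : ℕ} (f : Fin k → ℝ) : ∑ᶠ i, f i = ∑ i, f i :=
  finsum_eq_sum_of_fintype f

lemma finsum_mem_split {S T : Type} [Fintype S] [Fintype T] (C : Set (S ⊕ T)) (f : S ⊕ T → ℝ) :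
    ∑ᶠ c ∈ C, f c = (∑ a : S, if Sum.inl a ∈ C then f (Sum.inl a) else 0)
      + ∑ b : T, if Sum.inr b ∈ C then f (Sum.inr b) else 0 := by
  rw [finsum_mem_def, finsum_eq_sum_of_fintype, Fintype.sum_sum_type]
  congr 1 <;> { apply Finset.sum_congr rfl; intro x _; simp [Set.indicator_apply] }

lemma finsum_mem_fin {k : ℕ} (C : Set (Fin k)) (f : Fin k → ℝ) :
    ∑ᶠ c ∈ C, f c = ∑ c : Fin k, if c ∈ C then f c else 0 := by
  rw [finsum_mem_def, finsum_eq_sum_of_fintype]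
  apply Finset.sum_congr rfl; intro x _; simp [Set.indicator_apply]
/-- Deterministic distance-`k` reachability of a `∅`-labeled state. -/
def Det {U : Type} (p : U → U → ℝ) (V : U → Set Unit) : ℕ → U → Prop
  | 0, a => V a = ∅
  | (k+1), a => V a ≠ ∅ ∧ ∑ᶠ c ∈ {c | Det p V k c}, p a c = 1

lemma det_support {U : Type} [Fintype U] {p : U → U → ℝ} {V : U → Set Unit} {a : U}
    (hnn : ∀ c, 0 ≤ p a c) (hsum : ∑ c, p a c = 1) {k : ℕ}
    (h : Det p V (k+1) a) : ∀ c, 0 < p a c → Det p V k c := by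
  have h2 := h.2
  rw [finsum_mem_def, finsum_eq_sum_of_fintype] at h2
  have hz : ∑ c, (p a c - Set.indicator {c | Det p V k c} (p a) c) = 0 := by
    rw [Finset.sum_sub_distrib, hsum, h2]; ring
  have hnn2 : ∀ c ∈ Finset.univ, 0 ≤ p a c - Set.indicator {c | Det p V k c} (p a) c := by
    intro c _
    by_cases hc : c ∈ {c | Det p V k c}
    · simp [Set.indicator_of_mem hc]
    · simp [Set.indicator_of_notMem hc, hnn c]
  intro c hc
  by_contra hdet
  have := (Finset.sum_eq_zero_iff_of_nonneg hnn2).1 hz c (Finset.mem_univ c)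
  rw [Set.indicator_of_notMem (by exact hdet)] at this
  linarith

lemma det_unique {U : Type} [Fintype U] {p : U → U → ℝ} {V : U → Set Unit}
    (hnn : ∀ a c, 0 ≤ p a c) (hsum : ∀ a, ∑ c, p a c = 1) :
    ∀ {k m : ℕ} {a : U}, Det p V k a → Det p V m a → k = m := by
  intro k
  induction k with
  | zero =>
    intro m a h1 h2
    cases m with
    | zero => rfl
    | succ m => exact absurd h1 h2.1
  | succ k ih =>
    intro m a h1 h2
    cases m with
    | zero => exact absurd h2 h1.1
    | succ m =>
      have hex : ∃ c, 0 < p a c := by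
        by_contra hno
        push_neg at hno
        have : ∑ c, p a c = 0 := Finset.sum_eq_zero fun c _ => le_antisymm (hno c) (hnn a c)
        rw [hsum a] at this; norm_num at this
      obtain ⟨c, hc⟩ := hex
      have d1 := det_support (hnn a) (hsum a) h1 c hc
      have d2 := det_support (hnn a) (hsum a) h2 c hc
      rw [ih d1 d2]
lemma det_transfer {S T : Type} (M : MC S Unit) (N : MC T Unit)
    {B : (S ⊕ T) → (S ⊕ T) → Prop} (hB : Equivalence B)
    (hstep : ∀ a b, B a b → sumV M N a = sumV M N b ∧
      ∀ C : Set (S ⊕ T), (∀ x y, B x y → (x ∈ C ↔ y ∈ C)) →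
        (∑ᶠ c ∈ C, sumP M N a c) = ∑ᶠ c ∈ C, sumP M N b c) :
    ∀ (k : ℕ) (a b : S ⊕ T), B a b →
      (Det (sumP M N) (sumV M N) k a ↔ Det (sumP M N) (sumV M N) k b) := by
  intro k
  induction k with
  | zero =>
    intro a b hab
    have := (hstep a b hab).1
    simp only [Det, this]
  | succ k ih =>
    intro a b hab
    obtain ⟨hV, hS⟩ := hstep a b hab
    have hC : ∀ x y, B x y → (x ∈ {c | Det (sumP M N) (sumV M N) k c} ↔
        y ∈ {c | Det (sumP M N) (sumV M N) k c}) := fun x y hxy => ih x y hxy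
    have := hS _ hC
    simp only [Det, hV, this]
lemma satA_generic {m : ℕ} (W : MC (Fin (m+1)) Unit) (hs0 : W.s0.val ≠ 0)
    (hV : W.V = fun i => if i.val = 0 then ∅ else Set.univ)
    (hp0 : ∀ j, W.p 0 j = if j.val = 0 then 1 else 0) : SatA W I9 := by
  refine ⟨fun t s => (s = 0 ∧ t.val = 0) ∨ (s = 1 ∧ t.val ≠ 0), Or.inr ⟨rfl, hs0⟩, ?_⟩
  intro t s hts
  constructor
  · rcases hts with ⟨hs, ht⟩ | ⟨hs, ht⟩ <;> subst hs <;> simp [hV, I9, ht]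
  refine ⟨fun t' s' => if (t'.val = 0 ∧ s' = 0) ∨ (t'.val ≠ 0 ∧ s' = 1) then 1 else 0,
    fun t' s' => by positivity, ?_, ?_, ?_⟩
  · intro t' _
    rw [finsum_fin, Fin.sum_univ_two]
    by_cases h0 : t'.val = 0 <;> simp [h0]
  · intro s'
    rcases hts with ⟨hs, ht⟩ | ⟨hs, ht⟩
    · subst hs
      have ht0 : t = 0 := Fin.ext ht
      subst ht0
      rw [finsum_fin]
      have hs2 : s'.val = 0 ∨ s'.val = 1 := by omega
      rcases hs2 with h2 | h2 <;> [(have hs' : s' = 0 := Fin.ext h2); (have hs' : s' = 1 := Fin.ext h2)] <;> subst hs'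
      · have : ∀ t' : Fin (m+1),
            W.p 0 t' * (if (t'.val = 0 ∧ (0:Fin 2) = 0) ∨ (t'.val ≠ 0 ∧ (0:Fin 2) = 1) then 1 else 0)
            = if t' = 0 then 1 else 0 := by
          intro t'
          by_cases h0 : t'.val = 0
          · have : t' = 0 := Fin.ext h0
            subst this
            simp [hp0]
          · have : t' ≠ 0 := fun h => h0 (by rw [h]; rfl)
            simp [hp0, h0, this]
        rw [Finset.sum_congr rfl (fun t' _ => this t')]
        simp [I9]
      · have : ∀ t' : Fin (m+1),
            W.p 0 t' * (if (t'.val = 0 ∧ (1:Fin 2) = 0) ∨ (t'.val ≠ 0 ∧ (1:Fin 2) = 1) then 1 else 0)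
            = 0 := by
          intro t'
          by_cases h0 : t'.val = 0 <;> simp [hp0, h0]
        rw [Finset.sum_congr rfl (fun t' _ => this t')]
        simp [I9]
    · subst hs
      rw [finsum_fin]
      have h1 : (1 : Fin 2) ≠ 0 := by decide
      constructor
      · simp only [I9, h1, false_and, if_false]
        apply Finset.sum_nonneg
        intro t' _
        have := W.nonneg t t'
        positivity
      · simp only [I9, h1, if_false, if_true]
        calc ∑ t', W.p t t' * (if (t'.val = 0 ∧ s' = 0) ∨ (t'.val ≠ 0 ∧ s' = 1) then 1 else 0)
            ≤ ∑ t', W.p t t' := by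
              apply Finset.sum_le_sum
              intro t' _
              have hnn := W.nonneg t t'
              split <;> simp [hnn]
          _ = 1 := by rw [← finsum_fin]; exact W.sum_one t
  · intro t' s' hpos
    by_cases h : (t'.val = 0 ∧ s' = 0) ∨ (t'.val ≠ 0 ∧ s' = 1)
    · tauto
    · simp only [if_neg h, lt_self_iff_false] at hpos

lemma bisim_refl {S : Type} [Fintype S] (W : MC S Unit) : Bisimilar W W := by
  refine ⟨fun a b => Sum.elim id id a = Sum.elim id id b,
    ⟨fun _ => rfl, Eq.symm, Eq.trans⟩, rfl, ?_⟩
  intro a b hab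
  constructor
  · rcases a with x | x <;> rcases b with y | y <;> simp_all [sumV]
  intro C hC
  have key : ∀ x : S, (Sum.inl x ∈ C ↔ Sum.inr x ∈ C) := fun x => hC _ _ rfl
  rw [finsum_mem_split, finsum_mem_split]
  rcases a with x | x <;> rcases b with y | y <;> simp only [Sum.elim_inl, Sum.elim_inr, id] at hab <;> subst hab
  · rfl
  · simp only [sumP, ite_self]
    simp only [Finset.sum_const_zero, add_zero, zero_add]
    exact Finset.sum_congr rfl fun b _ => by rw [if_congr (key b) rfl rfl]
  · simp only [sumP, ite_self]
    simp only [Finset.sum_const_zero, add_zero, zero_add]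
    exact Finset.sum_congr rfl fun b _ => by rw [if_congr (key b).symm rfl rfl]
  · rfl
/-- The deterministic chain `1 → 2 → ⋯ → n+1 → 0`, with `0` absorbing. -/
def M9 (n : ℕ) : MC (Fin (n + 2)) Unit where
  s0 := ⟨1, by omega⟩
  p := fun i j => if j = (if h : i.val = 0 ∨ i.val = n + 1 then (⟨0, by omega⟩ : Fin (n + 2))
      else ⟨i.val + 1, by have := i.isLt; omega⟩) then 1 else 0
  nonneg := fun s s' => by positivity
  sum_one := fun s => by rw [finsum_fin]; simp [Finset.sum_ite_eq']
  V := fun i => if i.val = 0 then ∅ else Set.univ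

lemma M9_V {n : ℕ} (i : Fin (n + 2)) : (M9 n).V i = if i.val = 0 then ∅ else Set.univ := rfl

lemma M9_p_last {n : ℕ} (i : Fin (n + 2)) (hi : i.val = 0 ∨ i.val = n + 1) (j : Fin (n + 2)) :
    (M9 n).p i j = if j = ⟨0, by omega⟩ then 1 else 0 := by
  simp only [M9]
  rw [dif_pos hi]

lemma M9_p_mid {n : ℕ} (i : Fin (n + 2)) (hi : ¬(i.val = 0 ∨ i.val = n + 1)) (j : Fin (n + 2)) :
    (M9 n).p i j = if j = ⟨i.val + 1, by have := i.isLt; omega⟩ then 1 else 0 := by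
  simp only [M9]
  rw [dif_neg hi]

lemma finsum_mem_inl_indicator {S T : Type} [Fintype S] [DecidableEq S] [Fintype T] (M : MC S Unit)
    (N : MC T Unit) (i c : S) (hp : ∀ a, M.p i a = if a = c then 1 else 0)
    (C : Set (S ⊕ T)) (hc : Sum.inl c ∈ C) :
    ∑ᶠ x ∈ C, sumP M N (Sum.inl i) x = 1 := by
  rw [finsum_mem_split]
  have h2 : ∑ b : T, (if Sum.inr b ∈ C then sumP M N (Sum.inl i) (Sum.inr b) else 0) = 0 :=
    Finset.sum_eq_zero fun b _ => by simp [sumP]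
  rw [h2, add_zero]
  have key : ∀ a : S, (if Sum.inl a ∈ C then sumP M N (Sum.inl i) (Sum.inl a) else 0)
      = if a = c then 1 else 0 := by
    intro a
    by_cases hac : a = c
    · subst hac; simp [sumP, hp, hc]
    · simp [sumP, hp, hac]
  rw [Finset.sum_congr rfl fun a _ => key a]
  simp [Finset.sum_ite_eq']

lemma detM {n : ℕ} (N : MC (Fin (n + 1)) Unit) :
    ∀ k, k ≤ n → Det (sumP (M9 n) N) (sumV (M9 n) N) (k + 1)
      (Sum.inl ⟨n + 1 - k, by omega⟩) := by
  intro k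
  induction k with
  | zero =>
    intro _
    refine ⟨?_, ?_⟩
    · show (M9 n).V _ ≠ ∅
      rw [M9_V, if_neg (show ¬(n + 1 - 0 = 0) by omega)]
      simp
    · apply finsum_mem_inl_indicator (M9 n) N _ (⟨0, by omega⟩ : Fin (n + 2))
      · intro a
        rw [M9_p_last (⟨n + 1 - 0, by omega⟩ : Fin (n + 2)) (Or.inr (by simp)) a]
      · show Det (sumP (M9 n) N) (sumV (M9 n) N) 0 (Sum.inl ⟨0, by omega⟩)
        show (M9 n).V _ = ∅
        rw [M9_V, if_pos rfl]
  | succ k ih =>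
    intro hk
    have hk' : k ≤ n := by omega
    refine ⟨?_, ?_⟩
    · show (M9 n).V _ ≠ ∅
      rw [M9_V, if_neg (show ¬(n + 1 - (k + 1) = 0) by omega)]
      simp
    · apply finsum_mem_inl_indicator (M9 n) N _ (⟨n + 1 - k, by omega⟩ : Fin (n + 2))
      · intro a
        rw [M9_p_mid _ (show ¬(n + 1 - (k + 1) = 0 ∨ n + 1 - (k + 1) = n + 1) by omega)]
        refine ite_congr ?_ (fun _ => rfl) fun _ => rfl
        apply propext
        simp only [Fin.ext_iff, Fin.val_mk]
        omega
      · exact ih hk'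
lemma sumP_nonneg {S T : Type} (M : MC S Unit) (N : MC T Unit) :
    ∀ a c, 0 ≤ sumP M N a c := by
  intro a c
  rcases a with x | x <;> rcases c with y | y <;>
    simp [sumP, M.nonneg, N.nonneg]

lemma sumP_rowsum {S T : Type} [Fintype S] [Fintype T] (M : MC S Unit) (N : MC T Unit) :
    ∀ a, ∑ c, sumP M N a c = 1 := by
  intro a
  rw [Fintype.sum_sum_type]
  rcases a with x | x
  · simp only [sumP]
    rw [Finset.sum_const_zero, add_zero, ← finsum_eq_sum_of_fintype]
    exact M.sum_one x
  · simp only [sumP]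
    rw [Finset.sum_const_zero, zero_add, ← finsum_eq_sum_of_fintype]
    exact N.sum_one x

lemma detN {n : ℕ} (N : MC (Fin (n + 1)) Unit) (pv qv : ℕ → ℝ)
    (hp : N.p = pmcP n pv qv) (hV : N.V = pmcV n) :
    ∀ (m : ℕ) (i : Fin (n + 1)), 1 ≤ i.val →
      Det (sumP (M9 n) N) (sumV (M9 n) N) m (Sum.inr i) → m + i.val ≤ n + 1 := by
  have hnn := sumP_nonneg (M9 n) N
  have hsum := sumP_rowsum (M9 n) N
  intro m
  induction m with
  | zero =>
    intro i hi h
    exfalso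
    have hVi : N.V i = ∅ := h
    rw [hV] at hVi
    unfold pmcV at hVi
    rw [if_neg (by omega)] at hVi
    exact Set.univ_nonempty.ne_empty hVi
  | succ k ih =>
    intro i hi h
    have hsupp := det_support (hnn _) (hsum _) h
    cases k with
    | zero => have := i.isLt; omega
    | succ k' =>
      have hi0 : ¬ (i.val = 0) := by omega
      have hpself : N.p i i = pv i.val := by
        rw [hp]; unfold pmcP
        rw [if_neg hi0]
        by_cases hlt : i.val < n
        · rw [if_pos hlt, if_pos rfl]
        · rw [if_neg hlt, if_pos rfl]
      have hself0 : N.p i i = 0 := by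
        by_contra hne
        have pos : 0 < N.p i i := lt_of_le_of_ne (N.nonneg i i) (Ne.symm hne)
        have hd := hsupp (Sum.inr i) (show 0 < sumP (M9 n) N (Sum.inr i) (Sum.inr i) from pos)
        have := det_unique hnn hsum hd h
        omega
      have hq0 : N.p i ⟨0, by omega⟩ = 0 := by
        by_contra hne
        have pos : 0 < N.p i ⟨0, by omega⟩ := lt_of_le_of_ne (N.nonneg _ _) (Ne.symm hne)
        have hd := hsupp (Sum.inr ⟨0, by omega⟩)
          (show 0 < sumP (M9 n) N (Sum.inr i) (Sum.inr ⟨0, by omega⟩) from pos)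
        exact hd.1 (show N.V ⟨0, by omega⟩ = ∅ by rw [hV]; unfold pmcV; rw [if_pos rfl])
      have hne0i : (⟨0, by omega⟩ : Fin (n + 1)) ≠ i := by
        intro hj
        rw [Fin.ext_iff] at hj
        exact hi0 hj.symm
      by_cases hlt : i.val < n
      · have hq : N.p i ⟨0, by omega⟩ = qv i.val := by
          rw [hp]; unfold pmcP
          rw [if_neg hi0, if_pos hlt, if_neg hne0i, if_pos rfl]
        have hpv : pv i.val = 0 := by rw [← hpself]; exact hself0
        have hqv : qv i.val = 0 := by rw [← hq]; exact hq0
        have hji : (⟨i.val + 1, by omega⟩ : Fin (n + 1)) ≠ i := by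
          intro hj
          rw [Fin.ext_iff] at hj
          simp only [Fin.val_mk] at hj
          omega
        have hpj : N.p i ⟨i.val + 1, by omega⟩ = 1 - pv i.val - qv i.val := by
          rw [hp]; unfold pmcP
          rw [if_neg hi0, if_pos hlt, if_neg hji,
            if_neg (show ¬((⟨i.val + 1, by omega⟩ : Fin (n + 1)).val = 0) by simp),
            if_pos rfl]
        have hpos : 0 < N.p i ⟨i.val + 1, by omega⟩ := by
          rw [hpj, hpv, hqv]; norm_num
        have hd := hsupp (Sum.inr ⟨i.val + 1, by omega⟩)
          (show 0 < sumP (M9 n) N (Sum.inr i) (Sum.inr ⟨i.val + 1, by omega⟩) from hpos)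
        have hrec := ih ⟨i.val + 1, by omega⟩ (by simp) hd
        simp only [Fin.val_mk] at hrec
        omega
      · exfalso
        have : N.p i ⟨0, by omega⟩ = 1 - pv i.val := by
          rw [hp]; unfold pmcP
          rw [if_neg hi0, if_neg hlt, if_neg hne0i, if_pos rfl]
        rw [hq0] at this
        have hpv : pv i.val = 0 := by rw [← hpself]; exact hself0
        rw [hpv] at this
        norm_num at this

/-- for every `n ≥ 1`, the pMC `P_n` is entailed by the IMC `I` (every
instance of `P_n` is bisimilar to some at-every-step implementation of `I`) but not
equivalent to it: some MC satisfying `I` at-every-step is bisimilar to no instance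
of `P_n`. -/
theorem stmt9 (n : ℕ) (hn : 1 ≤ n) :
    (∀ N : MC (Fin (n + 1)) Unit, IsInst9 n N →
      ∃ (U : Type) (_ : Finite U) (M' : MC U Unit), SatA M' I9 ∧ Bisimilar N M') ∧
    ∃ (U : Type) (_ : Finite U) (M : MC U Unit), SatA M I9 ∧
      ∀ N : MC (Fin (n + 1)) Unit, IsInst9 n N → ¬ Bisimilar M N := by
  constructor
  · rintro N ⟨hs0, hV, pv, qv, hp⟩
    refine ⟨Fin (n + 1), inferInstance, N, ?_, bisim_refl N⟩
    apply satA_generic N (by omega)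
    · rw [hV]; rfl
    · intro j
      rw [hp]
      unfold pmcP
      rw [if_pos (by simp : ((0 : Fin (n + 1))).val = 0)]
  · refine ⟨Fin (n + 2), inferInstance, M9 n, ?_, ?_⟩
    · apply satA_generic (M9 n) (by simp [M9])
      · rfl
      · intro j
        rw [M9_p_last 0 (Or.inl (by simp)) j]
        refine ite_congr ?_ (fun _ => rfl) fun _ => rfl
        apply propext
        rw [Fin.ext_iff]
    · rintro N ⟨hs0N, hVN, pv, qv, hpN⟩ ⟨B, hEq, hInit, hStep⟩
      have htrans := det_transfer (M9 n) N hEq hStep (n + 1) _ _ hInit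
      have h1 := detM N n le_rfl
      have h2 : Det (sumP (M9 n) N) (sumV (M9 n) N) (n + 1) (Sum.inl (M9 n).s0) := by
        convert h1 using 3
        show (1 : ℕ) = n + 1 - n
        omega
      have h3 := htrans.1 h2
      have h4 := detN N pv qv hpN hVN (n + 1) N.s0 (by omega) h3
      omega
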